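/- For a distribution with finite moments of all orders, the sample r-th central moment satisfies √n·m̂_r = (1/√n)Σ(x_i - μ)^r - r μ_{r-1}·(1/√n)Σ(x_i - μ) + o_p(1), where m̂_r = (1/n)Σ(x_i - x̄)^r. -/

import Mathlib

open MeasureTheory ProbabilityTheory Filter Finset
open scoped ENNReal NNReal Topology

section Helpers
variable {Ω : Type*} [MeasurableSpace Ω] {P : Measure Ω}

lemma tim_zero_zero : TendstoInMeasure P (fun (_ : ℕ) (_ : Ω) => (0:ℝ)) atTop (fun _ => 0) := by
  rw [tendstoInMeasure_iff_dist]
  intro ε hε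
  have hset : {x : Ω | ε ≤ dist ((0:ℝ)) 0} = (∅ : Set Ω) := by
    ext x; simp [dist_self]; linarith
  simp only [hset, measure_empty]
  exact tendsto_const_nhds

lemma tim_zero_add {f g : ℕ → Ω → ℝ}
    (hf : TendstoInMeasure P f atTop (fun _ => 0))
    (hg : TendstoInMeasure P g atTop (fun _ => 0)) :
    TendstoInMeasure P (fun n ω => f n ω + g n ω) atTop (fun _ => 0) := by
  rw [tendstoInMeasure_iff_dist] at hf hg ⊢
  intro ε hε
  have h2 : 0 < ε / 2 := by positivity
  have key : ∀ n, P {x | ε ≤ dist (f n x + g n x) 0} ≤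
      P {x | ε/2 ≤ dist (f n x) 0} + P {x | ε/2 ≤ dist (g n x) 0} := by
    intro n
    refine le_trans (measure_mono ?_) (measure_union_le _ _)
    intro x hx
    simp only [Set.mem_setOf_eq, Real.dist_eq, sub_zero, Set.mem_union] at hx ⊢
    by_contra hcon
    push_neg at hcon
    have : |f n x + g n x| < ε := lt_of_le_of_lt (abs_add_le _ _) (by linarith [hcon.1, hcon.2])
    linarith
  have hsum := (hf (ε/2) h2).add (hg (ε/2) h2)
  rw [add_zero] at hsum
  exact tendsto_of_tendsto_of_tendsto_of_le_of_le tendsto_const_nhds hsum (fun n => zero_le) key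

lemma tim_zero_sum {ι : Type*} {s : Finset ι} {f : ι → ℕ → Ω → ℝ}
    (h : ∀ i ∈ s, TendstoInMeasure P (f i) atTop (fun _ => 0)) :
    TendstoInMeasure P (fun n ω => ∑ i ∈ s, f i n ω) atTop (fun _ => 0) := by
  classical
  induction s using Finset.induction_on with
  | empty => simpa using (tim_zero_zero (P := P))
  | @insert a s ha ih =>
      simp_rw [Finset.sum_insert ha]
      exact tim_zero_add (h _ (Finset.mem_insert_self _ _))
        (ih fun i hi => h i (Finset.mem_insert_of_mem hi))

def Tight (P : Measure Ω) (Y : ℕ → Ω → ℝ) : Prop :=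
  ∀ δ : ℝ, 0 < δ → ∃ M : ℝ, 0 < M ∧ ∀ n, P {ω | M ≤ |Y n ω|} ≤ ENNReal.ofReal δ

lemma tight_const (c : ℝ) : Tight P (fun _ _ => c) := by
  intro δ hδ
  refine ⟨|c| + 1, by positivity, fun n => ?_⟩
  show P {ω : Ω | |c| + 1 ≤ |c|} ≤ _
  have h0 : {ω : Ω | |c| + 1 ≤ |c|} = (∅ : Set Ω) :=
    Set.eq_empty_of_forall_notMem (fun ω hω => by simp only [Set.mem_setOf_eq] at hω; linarith)
  rw [h0]; simp

lemma Tight.mul {Y Z : ℕ → Ω → ℝ} (hY : Tight P Y) (hZ : Tight P Z) :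
    Tight P (fun n ω => Y n ω * Z n ω) := by
  intro δ hδ
  obtain ⟨M, hM, hMb⟩ := hY (δ/2) (by linarith)
  obtain ⟨M', hM', hMb'⟩ := hZ (δ/2) (by linarith)
  refine ⟨M * M', by positivity, fun n => ?_⟩
  have hsub : {ω | M * M' ≤ |Y n ω * Z n ω|} ⊆ {ω | M ≤ |Y n ω|} ∪ {ω | M' ≤ |Z n ω|} := by
    intro ω hω
    simp only [Set.mem_setOf_eq, Set.mem_union] at hω ⊢
    by_contra h
    push_neg at h
    have : |Y n ω * Z n ω| < M * M' := by
      rw [abs_mul]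
      exact mul_lt_mul'' h.1 h.2 (abs_nonneg _) (abs_nonneg _)
    linarith
  calc P {ω | M * M' ≤ |Y n ω * Z n ω|}
      ≤ P {ω | M ≤ |Y n ω|} + P {ω | M' ≤ |Z n ω|} :=
        (measure_mono hsub).trans (measure_union_le _ _)
    _ ≤ ENNReal.ofReal (δ/2) + ENNReal.ofReal (δ/2) := add_le_add (hMb n) (hMb' n)
    _ = ENNReal.ofReal δ := by
        rw [← ENNReal.ofReal_add (by linarith) (by linarith)]; norm_num

lemma Tight.pow {Y : ℕ → Ω → ℝ} (hY : Tight P Y) (j : ℕ) :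
    Tight P (fun n ω => (Y n ω) ^ j) := by
  induction j with
  | zero => simpa using (tight_const (P := P) 1)
  | succ j ih => simp_rw [pow_succ]; exact ih.mul hY

lemma Tight.mul_tim {Y Z : ℕ → Ω → ℝ} (hY : Tight P Y)
    (hZ : TendstoInMeasure P Z atTop (fun _ => 0)) :
    TendstoInMeasure P (fun n ω => Y n ω * Z n ω) atTop (fun _ => 0) := by
  rw [tendstoInMeasure_iff_dist] at hZ ⊢
  intro ε hε
  rw [ENNReal.tendsto_atTop_zero]
  intro δ hδ
  set δr : ℝ := (min δ 1).toReal / 2 with hδr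
  have hδr_pos : 0 < δr := by
    apply div_pos _ two_pos
    rw [ENNReal.toReal_pos_iff]
    exact ⟨lt_min hδ one_pos, lt_of_le_of_lt (min_le_right _ _) (by norm_num)⟩
  obtain ⟨M, hM, hMb⟩ := hY δr hδr_pos
  have hZ' := hZ (ε/M) (by positivity)
  rw [ENNReal.tendsto_atTop_zero] at hZ'
  obtain ⟨N, hN⟩ := hZ' (ENNReal.ofReal δr) (by simpa using hδr_pos)
  refine ⟨N, fun n hn => ?_⟩
  have hsub : {x | ε ≤ dist (Y n x * Z n x) 0} ⊆
      {ω | M ≤ |Y n ω|} ∪ {x | ε/M ≤ dist (Z n x) 0} := by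
    intro x hx
    simp only [Set.mem_setOf_eq, Real.dist_eq, sub_zero, Set.mem_union] at hx ⊢
    by_contra h
    push_neg at h
    have : |Y n x * Z n x| < ε := by
      rw [abs_mul]
      calc |Y n x| * |Z n x| < M * (ε/M) := mul_lt_mul'' h.1 h.2 (abs_nonneg _) (abs_nonneg _)
        _ = ε := by field_simp
    linarith
  calc P {x | ε ≤ dist (Y n x * Z n x) 0}
      ≤ P {ω | M ≤ |Y n ω|} + P {x | ε/M ≤ dist (Z n x) 0} :=
        (measure_mono hsub).trans (measure_union_le _ _)
    _ ≤ ENNReal.ofReal δr + ENNReal.ofReal δr := add_le_add (hMb n) (hN n hn)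
    _ ≤ δ := by
        rw [← ENNReal.ofReal_add hδr_pos.le hδr_pos.le]
        have h1 : δr + δr = (min δ 1).toReal := by rw [hδr]; ring
        rw [h1, ENNReal.ofReal_toReal
          (lt_of_le_of_lt (min_le_right _ _) (by norm_num : (1:ℝ≥0∞) < ⊤)).ne]
        exact min_le_left _ _

end Helpers

theorem sample_central_moment_expansion {Ω : Type*} [MeasurableSpace Ω]
    (P : Measure Ω) [IsProbabilityMeasure P] (X : ℕ → Ω → ℝ)
    (hmeas : ∀ i, Measurable (X i))
    (hindep : iIndepFun X P)
    (hident : ∀ i, IdentDistrib (X i) (X 0) P P)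
    (hLp : ∀ p : ℕ, MemLp (X 0) p P)
    (μ : ℝ) (hμ : ∫ ω, X 0 ω ∂P = μ)
    (r : ℕ) (hr : 1 ≤ r)
    (μr1 : ℝ) (hμr1 : μr1 = ∫ ω, (X 0 ω - μ) ^ (r - 1) ∂P) :
    TendstoInMeasure P
      (fun (n : ℕ) (ω : Ω) =>
        Real.sqrt n *
            ((1 / (n : ℝ)) *
              ∑ i ∈ range n, (X i ω - (1 / (n : ℝ)) * ∑ j ∈ range n, X j ω) ^ r) -
          ((1 / Real.sqrt n) * ∑ i ∈ range n, (X i ω - μ) ^ r -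
            (r : ℝ) * μr1 * ((1 / Real.sqrt n) * ∑ i ∈ range n, (X i ω - μ))))
      atTop (fun _ => 0) := by
  -- abbreviations
  set a : ℕ → ℕ → Ω → ℝ := fun k n ω => ∑ i ∈ range n, (X i ω - μ) ^ k with ha
  set s : ℕ → Ω → ℝ := fun n ω => ∑ i ∈ range n, (X i ω - μ) with hs
  set Y : ℕ → Ω → ℝ := fun n ω => (1 / Real.sqrt n) * s n ω with hY
  set Zc : ℕ → ℕ → Ω → ℝ := fun k n ω =>
    (Real.sqrt n * (1 / (n:ℝ)) * (Real.sqrt n / (n:ℝ)) ^ (r - k)) * a k n ω with hZc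
  set F : ℕ → Ω → ℝ := fun n ω =>
    ((-(r:ℝ)) * Y n ω) * ((1 / (n:ℝ)) * a (r-1) n ω - μr1) +
      ∑ k ∈ range (r-1),
        ((((r.choose k : ℕ) : ℝ) * (-1) ^ (r - k) * (Y n ω) ^ (r - k)) * Zc k n ω) with hF
  -- strong law of large numbers for each power
  have hslln : ∀ j : ℕ, ∀ᵐ ω ∂P, Tendsto (fun n : ℕ => (a j n ω) / n) atTop
      (𝓝 (∫ ω, (X 0 ω - μ) ^ j ∂P)) := by
    intro j
    have hu : Measurable (fun x : ℝ => (x - μ) ^ j) :=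
      (measurable_id.sub_const μ).pow_const j
    have hint : Integrable (fun ω => (X 0 ω - μ) ^ j) P := by
      rcases Nat.eq_zero_or_pos j with hj | hj
      · simp only [hj, pow_zero]
        exact integrable_const 1
      · have hm : MemLp (fun ω => X 0 ω - μ) j P := (hLp j).sub (memLp_const μ)
        have hInt := hm.integrable_norm_rpow (by exact_mod_cast hj.ne')
          (ENNReal.natCast_ne_top j)
        refine Integrable.mono' hInt ((hmeas 0).sub measurable_const |>.pow_const j
          |>.aestronglyMeasurable) ?_
        filter_upwards with ω
        rw [ENNReal.toReal_natCast, Real.norm_eq_abs, Real.norm_eq_abs,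
          Real.rpow_natCast, abs_pow]
    have hpair : Pairwise (Function.onFun (IndepFun · · P) (fun i ω => (X i ω - μ) ^ j)) := by
      intro i k hik
      exact (hindep.indepFun hik).comp hu hu
    have hid : ∀ i, IdentDistrib (fun ω => (X i ω - μ) ^ j) (fun ω => (X 0 ω - μ) ^ j) P P :=
      fun i => (hident i).comp hu
    have := strong_law_ae_real (fun i ω => (X i ω - μ) ^ j) hint hpair hid
    filter_upwards [this] with ω hω
    exact hω

  -- tightness of Y
  have hYtight : Tight P Y := by
    have hX2 : MemLp (X 0) 2 P := by simpa using hLp 2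
    have hXi2 : ∀ i, MemLp (X i) 2 P := fun i => (hident i).symm.memLp_snd hX2
    have hW2 : ∀ i, MemLp (fun ω => X i ω - μ) 2 P := fun i => (hXi2 i).sub (memLp_const μ)
    have hWid : ∀ i, IdentDistrib (fun ω => X i ω - μ) (fun ω => X 0 ω - μ) P P :=
      fun i => (hident i).comp (measurable_id.sub_const μ)
    have hWindep : ∀ i j : ℕ, i ≠ j →
        IndepFun (fun ω => X i ω - μ) (fun ω => X j ω - μ) P := fun i j hij =>
      (hindep.indepFun hij).comp (measurable_id.sub_const μ) (measurable_id.sub_const μ)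
    have hSmem : ∀ n : ℕ, MemLp (∑ i ∈ range n, (fun ω => X i ω - μ)) 2 P :=
      fun n => memLp_finset_sum' (range n) (fun i _ => hW2 i)
    have hSint : ∀ n : ℕ, (∫ ω, (∑ i ∈ range n, (fun ω => X i ω - μ)) ω ∂P) = 0 := by
      intro n
      simp only [Finset.sum_apply]
      rw [integral_finset_sum _ (fun i _ => ((hW2 i).integrable one_le_two))]
      have h0 : ∀ i, ∫ ω, (X i ω - μ) ∂P = 0 := by
        intro i
        rw [integral_sub ((memLp_one_iff_integrable.mp
          ((hident i).symm.memLp_snd (by simpa using hLp 1)))) (integrable_const μ),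
          (hident i).integral_eq, hμ, integral_const]
        simp
      simp [h0]
    have hSvar : ∀ n : ℕ, variance (∑ i ∈ range n, (fun ω => X i ω - μ)) P
        = n * variance (fun ω => X 0 ω - μ) P := by
      intro n
      rw [IndepFun.variance_sum (fun i _ => hW2 i)
        (fun i _ j _ hij => hWindep i j hij)]
      have : ∀ i ∈ range n, variance (fun ω => X i ω - μ) P
          = variance (fun ω => X 0 ω - μ) P := fun i _ => (hWid i).variance_eq
      rw [Finset.sum_congr rfl this, Finset.sum_const, card_range, nsmul_eq_mul]
    intro δ hδ
    set σ2 := variance (fun ω => X 0 ω - μ) P with hσ2def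
    have hσ2 : 0 ≤ σ2 := variance_nonneg _ _
    set M : ℝ := Real.sqrt (σ2/δ) + 1 with hMdef
    have hMpos : 0 < M := by positivity
    have hMsq : σ2 / M^2 ≤ δ := by
      rw [div_le_iff₀ (by positivity)]
      have h2 : (Real.sqrt (σ2/δ))^2 = σ2/δ := Real.sq_sqrt (by positivity)
      have h1 : σ2/δ ≤ M^2 := by nlinarith [Real.sqrt_nonneg (σ2/δ)]
      have h3 := mul_le_mul_of_nonneg_right h1 hδ.le
      rw [div_mul_cancel₀ _ hδ.ne'] at h3
      linarith
    refine ⟨M, hMpos, fun n => ?_⟩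
    rcases Nat.eq_zero_or_pos n with rfl | hn
    · have hempty : {ω | M ≤ |Y 0 ω|} = (∅ : Set Ω) := by
        refine Set.eq_empty_of_forall_notMem (fun ω hω => ?_)
        simp only [Set.mem_setOf_eq, hY, hs, range_zero, sum_empty, mul_zero, abs_zero] at hω
        linarith
      rw [hempty]
      simp
    · have hnR : (0:ℝ) < n := by exact_mod_cast hn
      have hsq : Real.sqrt n > 0 := Real.sqrt_pos.mpr hnR
      have hc : (0:ℝ) < M * Real.sqrt n := by positivity
      have hcheb := meas_ge_le_variance_div_sq (μ := P) (hSmem n) hc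
      rw [hSint n, hSvar n] at hcheb
      have hincl : {ω | M ≤ |Y n ω|} ⊆
          {ω | M * Real.sqrt n ≤ |(∑ i ∈ range n, (fun ω => X i ω - μ)) ω - 0|} := by
        intro ω hω
        simp only [Set.mem_setOf_eq, hY, hs, Finset.sum_apply, sub_zero] at hω ⊢
        rw [abs_mul, abs_of_nonneg (by positivity : (0:ℝ) ≤ 1 / Real.sqrt n)] at hω
        have h3 : M * Real.sqrt n ≤
            (1 / Real.sqrt n * |∑ i ∈ range n, (X i ω - μ)|) * Real.sqrt n :=
          mul_le_mul_of_nonneg_right hω hsq.le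
        calc M * Real.sqrt n ≤ _ := h3
          _ = |∑ i ∈ range n, (X i ω - μ)| := by field_simp
      calc P {ω | M ≤ |Y n ω|}
          ≤ P {ω | M * Real.sqrt n ≤
              |(∑ i ∈ range n, (fun ω => X i ω - μ)) ω - 0|} := measure_mono hincl
        _ ≤ ENNReal.ofReal ((n:ℝ) * σ2 / (M * Real.sqrt n)^2) := hcheb
        _ ≤ ENNReal.ofReal δ := by
            apply ENNReal.ofReal_le_ofReal
            have h4 : (Real.sqrt n)^2 = (n:ℝ) := Real.sq_sqrt hnR.le
            have h5 : (n:ℝ) * σ2 / (M * Real.sqrt n)^2 = σ2 / M^2 := by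
              rw [mul_pow, h4]
              field_simp
            rw [h5]
            exact hMsq

  -- Z1 tends to zero in measure
  have hZ1 : TendstoInMeasure P (fun (n:ℕ) ω => (1 / (n:ℝ)) * a (r-1) n ω - μr1) atTop
      (fun _ => 0) := by
    have hmeasb : ∀ n : ℕ, AEStronglyMeasurable
        (fun ω => (1/(n:ℝ)) * a (r-1) n ω - μr1) P := by
      intro n
      apply Measurable.aestronglyMeasurable
      apply Measurable.sub _ measurable_const
      apply Measurable.const_mul
      simp only [ha]
      exact Finset.measurable_sum _ (fun i _ => ((hmeas i).sub measurable_const).pow_const _)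
    refine tendstoInMeasure_of_tendsto_ae hmeasb ?_
    filter_upwards [hslln (r-1)] with ω hω
    have h1 := hω.sub (tendsto_const_nhds (x := ∫ ω, (X 0 ω - μ)^(r-1) ∂P))
    rw [sub_self] at h1
    refine Tendsto.congr (fun n => ?_) h1
    rw [hμr1]
    ring

  -- each Zc k tends to zero in measure (k ≤ r-2)
  have hZk : ∀ k ∈ range (r-1), TendstoInMeasure P (Zc k) atTop (fun _ => 0) := by
    intro k hk
    have hjk : 2 ≤ r - k := by have := mem_range.mp hk; omega
    have hsqrtTop : Tendsto (fun n : ℕ => Real.sqrt n) atTop atTop := by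
      apply tendsto_atTop_atTop.mpr
      intro b
      refine ⟨⌈(max b 0)^2⌉₊, fun n hn => ?_⟩
      have h1 : ((max b 0)^2 : ℝ) ≤ n := le_trans (Nat.le_ceil _) (by exact_mod_cast hn)
      calc b ≤ max b 0 := le_max_left _ _
        _ = Real.sqrt ((max b 0)^2) := (Real.sqrt_sq (le_max_right _ _)).symm
        _ ≤ Real.sqrt n := Real.sqrt_le_sqrt h1
    have hginv : Tendsto (fun n : ℕ => 1/Real.sqrt n) atTop (𝓝 0) := by
      simpa [one_div, Pi.inv_def] using hsqrtTop.inv_tendsto_atTop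
    have hg : Tendsto (fun n : ℕ =>
        Real.sqrt n * (1/(n:ℝ)) * (Real.sqrt n / (n:ℝ)) ^ (r-k) * n) atTop (𝓝 0) := by
      apply tendsto_of_tendsto_of_tendsto_of_le_of_le' tendsto_const_nhds hginv
      · filter_upwards with n
        positivity
      · filter_upwards [eventually_ge_atTop 1] with n hn
        have hnR : (0:ℝ) < n := by exact_mod_cast hn
        have hsq : (0:ℝ) < Real.sqrt n := Real.sqrt_pos.mpr hnR
        have hsqn : Real.sqrt n / (n:ℝ) = 1 / Real.sqrt n := by
          rw [eq_div_iff hsq.ne', div_mul_eq_mul_div, Real.mul_self_sqrt hnR.le]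
          field_simp
        have hle1 : 1 / Real.sqrt n ≤ 1 := by
          rw [div_le_one hsq]
          have : (1:ℝ) ≤ n := by exact_mod_cast hn
          calc (1:ℝ) = Real.sqrt 1 := Real.sqrt_one.symm
            _ ≤ Real.sqrt n := Real.sqrt_le_sqrt this
        have hpow : (Real.sqrt n / (n:ℝ)) ^ (r-k) ≤ (1/Real.sqrt n)^2 := by
          rw [hsqn]
          exact pow_le_pow_of_le_one (by positivity) hle1 hjk
        have h2 : (1/Real.sqrt n)^2 = 1/(n:ℝ) := by
          rw [div_pow, one_pow, Real.sq_sqrt hnR.le]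
        have hA : (Real.sqrt n / (n:ℝ)) ^ (r-k) ≤ 1/(n:ℝ) := hpow.trans_eq h2
        calc Real.sqrt n * (1/(n:ℝ)) * (Real.sqrt n / (n:ℝ)) ^ (r-k) * n
            ≤ Real.sqrt n * (1/(n:ℝ)) * (1/(n:ℝ)) * n := by gcongr
          _ = Real.sqrt n / n := by field_simp
          _ = 1 / Real.sqrt n := hsqn
    have hmeasb : ∀ n : ℕ, AEStronglyMeasurable (Zc k n) P := by
      intro n
      apply Measurable.aestronglyMeasurable
      simp only [hZc, ha]
      apply Measurable.const_mul
      exact Finset.measurable_sum _ (fun i _ => ((hmeas i).sub measurable_const).pow_const _)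
    refine tendstoInMeasure_of_tendsto_ae hmeasb ?_
    filter_upwards [hslln k] with ω hω
    have h2 := hg.mul hω
    rw [zero_mul] at h2
    refine h2.congr' ?_
    filter_upwards [eventually_ge_atTop 1] with n hn
    have hnR : (0:ℝ) < n := by exact_mod_cast hn
    simp only [hZc, ha]
    field_simp

  -- F tends to zero in measure
  have hFtim : TendstoInMeasure P F atTop (fun _ => 0) := by
    rw [hF]
    apply tim_zero_add
    · exact ((tight_const (-(r:ℝ))).mul hYtight).mul_tim hZ1
    · apply tim_zero_sum (f := fun k n ω =>
        ((((r.choose k : ℕ) : ℝ) * (-1) ^ (r - k) * (Y n ω) ^ (r - k)) * Zc k n ω))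
      intro k hk
      exact ((tight_const (((r.choose k : ℕ) : ℝ) * (-1) ^ (r - k))).mul
        (hYtight.pow (r-k))).mul_tim (hZk k hk)
  -- the pointwise identity
  have hGF : ∀ (n:ℕ) (ω:Ω), (Real.sqrt n *
            ((1 / (n : ℝ)) *
              ∑ i ∈ range n, (X i ω - (1 / (n : ℝ)) * ∑ j ∈ range n, X j ω) ^ r) -
          ((1 / Real.sqrt n) * ∑ i ∈ range n, (X i ω - μ) ^ r -
            (r : ℝ) * μr1 * ((1 / Real.sqrt n) * ∑ i ∈ range n, (X i ω - μ)))) = F n ω := by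
    intro n ω
    rcases Nat.eq_zero_or_pos n with rfl | hn
    · simp [hF, hY, hZc, ha, hs]
    obtain ⟨r', rfl⟩ : ∃ r', r = r' + 1 := ⟨r - 1, by omega⟩
    have hnR : (0:ℝ) < n := by exact_mod_cast hn
    have hn0 : (n:ℝ) ≠ 0 := hnR.ne'
    set t := Real.sqrt (n:ℝ) with htdef
    have ht : 0 < t := Real.sqrt_pos.mpr hnR
    have ht2 : t^2 = (n:ℝ) := Real.sq_sqrt hnR.le
    -- rewrite the inner centered term
    have hxbar : ∀ i, X i ω - (1/(n:ℝ)) * ∑ j ∈ range n, X j ω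
        = (X i ω - μ) + (-(s n ω / n)) := by
      intro i
      have hsum : ∑ j ∈ range n, X j ω = s n ω + n * μ := by
        simp only [hs]
        rw [show (∑ j ∈ range n, X j ω) = ∑ j ∈ range n, ((X j ω - μ) + μ) from
          Finset.sum_congr rfl (fun j _ => by ring)]
        rw [Finset.sum_add_distrib, Finset.sum_const, card_range, nsmul_eq_mul]
      rw [hsum]
      field_simp
      ring
    -- binomial expansion
    have hbin : ∑ i ∈ range n, (X i ω - (1/(n:ℝ)) * ∑ j ∈ range n, X j ω) ^ (r'+1)
        = ∑ k ∈ range (r'+2), a k n ω *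
            ((-(s n ω / n)) ^ (r'+1-k) * (((r'+1).choose k : ℕ) : ℝ)) := by
      rw [Finset.sum_congr rfl (fun i _ => by rw [hxbar i, add_pow])]
      rw [Finset.sum_comm]
      refine Finset.sum_congr rfl (fun k hk => ?_)
      simp only [ha, mul_assoc]
      rw [← Finset.sum_mul]
    rw [hbin]
    have hsr : ∑ i ∈ range n, (X i ω - μ) = s n ω := rfl
    have haR : ∑ i ∈ range n, (X i ω - μ) ^ (r'+1) = a (r'+1) n ω := rfl
    rw [hsr, haR]
    rw [Finset.sum_range_succ, Finset.sum_range_succ]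
    have e0 : r' + 1 - (r'+1) = 0 := by omega
    have e1 : r' + 1 - r' = 1 := by omega
    rw [e0, e1, Nat.choose_self, Nat.choose_succ_self_right]
    simp only [hF, hY, hZc, hsr]
    have er : r' + 1 - 1 = r' := by omega
    rw [er]
    -- replace n by t^2
    rw [← ht2]
    have hst : Real.sqrt (t^2) = t := by rw [ht2]
    rw [hst]
    -- termwise identity for the remaining sum
    have hterm : ∀ k ∈ range r',
        a k n ω * ((-(s n ω / t^2)) ^ (r'+1-k) * (((r'+1).choose k : ℕ) : ℝ))
        = t * ((((r'+1).choose k : ℕ) : ℝ) * (-1) ^ (r'+1-k) *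
            (1 / t * s n ω) ^ (r'+1-k) *
            (t * (1 / t^2) * (t / t^2) ^ (r'+1-k) * a k n ω)) := by
      intro k hk
      set A := a k n ω
      set S := s n ω
      set j := r' + 1 - k with hj
      set C := (((r'+1).choose k : ℕ) : ℝ)
      have hu : t ^ j ≠ 0 := pow_ne_zero _ ht.ne'
      have h1 : (-(S / t^2)) ^ j = (-1)^j * (S^j / (t^j)^2) := by
        rw [neg_pow, div_pow, ← pow_mul, ← pow_mul, Nat.mul_comm 2 j]
      have h2 : (1 / t * S) ^ j = (1 / t^j) * S^j := by
        rw [mul_pow, div_pow, one_pow]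
      have h3 : (t / t^2) ^ j = t^j / (t^j)^2 := by
        rw [div_pow, ← pow_mul, ← pow_mul, Nat.mul_comm 2 j]
      rw [h1, h2, h3]
      field_simp
    rw [Finset.sum_congr rfl hterm, ← Finset.mul_sum]
    generalize (∑ k ∈ range r', (((r'+1).choose k : ℕ) : ℝ) * (-1) ^ (r'+1-k) *
            (1 / t * s n ω) ^ (r'+1-k) *
            (t * (1 / t^2) * (t / t^2) ^ (r'+1-k) * a k n ω)) = SR
    push_cast
    field_simp
    ring
  exact hFtim.congr (fun n => Filter.Eventually.of_forall (fun ω => (hGF n ω).symm))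
    Filter.EventuallyEq.rfl
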